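/- Let λ, D : [0, T) → ℝ be the maximal solution of the ODE system λ' = D(1 − λ), D' = −D² − λ with initial data λ(0) = λ_0 < 1, D(0) = D_0 satisfying Δ = D_0² + 2λ_0 − 1 > 0. Then the solution blows up in finite time: T < ∞, and D(t) → −∞ and λ(t) → −∞ as t → T⁻. -/

import Mathlib

open Filter Set Real
open scoped ENNReal

lemma gronwall_zero {F g : ℝ → ℝ} {b : ℝ} (hb : 0 ≤ b)
    (hd : ∀ s ∈ Icc 0 b, HasDerivAt F (g s * F s) s)
    (hg : ContinuousOn g (Icc 0 b))
    (hF0 : F 0 = 0) : F b = 0 := by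
  obtain ⟨K, hK⟩ := (isCompact_Icc (a := (0:ℝ)) (b := b)).exists_bound_of_continuousOn hg
  have hcont : ContinuousOn F (Icc 0 b) := fun s hs =>
    ((hd s hs).continuousAt).continuousWithinAt
  have := norm_le_gronwallBound_of_norm_deriv_right_le (δ := 0) (K := K) (ε := 0)
    hcont (fun x hx => ((hd x (Ico_subset_Icc_self hx)).hasDerivWithinAt))
    (by simp [hF0]) (fun x hx => by
      have h1 := hK x (Ico_subset_Icc_self hx)
      rw [norm_mul, add_zero]
      exact mul_le_mul_of_nonneg_right h1 (norm_nonneg _))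
  have hb' := this b ⟨hb, le_refl b⟩
  rw [sub_zero, gronwallBound_ε0_δ0] at hb'
  exact norm_eq_zero.mp (le_antisymm hb' (norm_nonneg _))

set_option maxHeartbeats 2000000 in
/-- 1D oscillations, blow-up direction of the criterion: let `(λ, D)` be the
maximal solution of `λ' = D(1 − λ)`, `D' = −D² − λ` on `[0, T)` (with
`T ∈ (0, ∞]`, maximality meaning that no solution with the same initial data
exists on a strictly longer interval) with `λ(0) = λ₀ < 1` and
`Δ = D₀² + 2λ₀ − 1 > 0`. Then `T` is finite and `λ(t) → −∞`, `D(t) → −∞`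
as `t → T⁻`. -/
theorem oneD_blow_up (lam₀ D₀ : ℝ) (hlam₀ : lam₀ < 1)
    (hΔ : 0 < D₀ ^ 2 + 2 * lam₀ - 1)
    (T : ℝ≥0∞) (hT : 0 < T) (lam D : ℝ → ℝ)
    (hlam0 : lam 0 = lam₀) (hD0 : D 0 = D₀)
    (hsol : ∀ t : ℝ, 0 ≤ t → ENNReal.ofReal t < T →
      HasDerivAt lam (D t * (1 - lam t)) t ∧
      HasDerivAt D (-(D t) ^ 2 - lam t) t)
    (hmax : ∀ T' : ℝ≥0∞, T < T' →
      ¬ ∃ lam' D' : ℝ → ℝ, lam' 0 = lam₀ ∧ D' 0 = D₀ ∧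
          ∀ t : ℝ, 0 ≤ t → ENNReal.ofReal t < T' →
            HasDerivAt lam' (D' t * (1 - lam' t)) t ∧
            HasDerivAt D' (-(D' t) ^ 2 - lam' t) t) :
    ∃ Tr : ℝ, 0 < Tr ∧ T = ENNReal.ofReal Tr ∧
      Tendsto lam (nhdsWithin Tr (Set.Iio Tr)) atBot ∧
      Tendsto D (nhdsWithin Tr (Set.Iio Tr)) atBot := by
  have hl1 : (0:ℝ) < (lam₀ - 1)^2 := by
    have : lam₀ - 1 ≠ 0 := sub_ne_zero.mpr (ne_of_lt hlam₀)
    positivity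
  set C₀ : ℝ := (D₀^2 + 2*lam₀ - 1)/(lam₀-1)^2 with hC₀def
  have hC₀ : 0 < C₀ := div_pos hΔ hl1
  set F : ℝ → ℝ := fun s => D s^2 + 2*lam s - 1 - C₀*(lam s - 1)^2 with hFdef
  have hF0 : F 0 = 0 := by
    simp only [hFdef, hlam0, hD0, hC₀def]; field_simp
    rw [div_self (sub_ne_zero.mpr (ne_of_lt hlam₀)), sub_self, mul_zero]
  -- derivative of F
  have hFd : ∀ t, 0 ≤ t → ENNReal.ofReal t < T →
      HasDerivAt F ((-2 * D t) * F t) t := by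
    intro t ht hT'
    obtain ⟨h1, h2⟩ := hsol t ht hT'
    have h3 := (h2.pow 2).add (h1.const_mul 2)
    have h4 := ((h1.sub_const 1).pow 2).const_mul C₀
    have h5 := (h3.sub_const 1).sub h4
    have h6 : HasDerivAt F _ t := h5
    convert h6 using 1
    simp only [hFdef]; ring
  -- F vanishes identically
  have hFzero : ∀ t, 0 ≤ t → ENNReal.ofReal t < T → F t = 0 := by
    intro t ht hT'
    have hmem : ∀ s ∈ Icc (0:ℝ) t, 0 ≤ s ∧ ENNReal.ofReal s < T := fun s hs =>
      ⟨hs.1, lt_of_le_of_lt (ENNReal.ofReal_le_ofReal hs.2) hT'⟩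
    refine gronwall_zero ht (fun s hs => hFd s (hmem s hs).1 (hmem s hs).2) ?_ hF0
    intro s hs
    have hD : ContinuousAt D s := (hsol s (hmem s hs).1 (hmem s hs).2).2.continuousAt
    exact (continuousAt_const.mul hD).continuousWithinAt
  -- lam < 1 on the domain
  have hlt1 : ∀ t, 0 ≤ t → ENNReal.ofReal t < T → lam t < 1 := by
    intro t ht hT'
    by_contra hcon
    push_neg at hcon
    have hmem : ∀ s ∈ Icc (0:ℝ) t, 0 ≤ s ∧ ENNReal.ofReal s < T := fun s hs =>
      ⟨hs.1, lt_of_le_of_lt (ENNReal.ofReal_le_ofReal hs.2) hT'⟩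
    have hcontlam : ContinuousOn lam (Icc 0 t) := fun s hs =>
      ((hsol s (hmem s hs).1 (hmem s hs).2).1.continuousAt).continuousWithinAt
    have h1 : (1:ℝ) ∈ Icc (lam 0) (lam t) := ⟨by rw [hlam0]; exact hlam₀.le, hcon⟩
    obtain ⟨s, hs, hseq⟩ := intermediate_value_Icc ht hcontlam h1
    have hFs := hFzero s (hmem s hs).1 (hmem s hs).2
    simp only [hFdef, hseq] at hFs
    nlinarith [sq_nonneg (D s)]
  -- the key relation and derivative bound
  have hrel : ∀ t, 0 ≤ t → ENNReal.ofReal t < T →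
      D t^2 + 1 = C₀*(1 - lam t)^2 + 2*(1 - lam t) := by
    intro t ht hT'
    have := hFzero t ht hT'
    simp only [hFdef] at this
    nlinarith [this]
  have hDd : ∀ t, 0 ≤ t → ENNReal.ofReal t < T →
      -(D t)^2 - lam t ≤ -(1 + D t^2)/2 := by
    intro t ht hT'
    have h1 := hrel t ht hT'
    have h2 := hlt1 t ht hT'
    nlinarith [mul_pos hC₀ (mul_pos (sub_pos.mpr h2) (sub_pos.mpr h2))]
  -- the arctan bound: every t in the domain satisfies t < Tstar
  have htlt : ∀ t, 0 ≤ t → ENNReal.ofReal t < T → t < 2*Real.arctan D₀ + π := by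
    intro t ht hT'
    have hmem : ∀ s ∈ Icc (0:ℝ) t, 0 ≤ s ∧ ENNReal.ofReal s < T := fun s hs =>
      ⟨hs.1, lt_of_le_of_lt (ENNReal.ofReal_le_ofReal hs.2) hT'⟩
    set φ : ℝ → ℝ := fun s => Real.arctan (D s) + s/2 with hφdef
    have hφd : ∀ s ∈ Icc (0:ℝ) t, HasDerivAt φ
        ((1/(1 + D s^2)) * (-(D s)^2 - lam s) + 1/2) s := by
      intro s hs
      have h2 := (hsol s (hmem s hs).1 (hmem s hs).2).2
      have := (Real.hasDerivAt_arctan (D s)).comp s h2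
      exact this.add ((hasDerivAt_id s).div_const 2)
    have hφanti : AntitoneOn φ (Icc 0 t) := by
      apply antitoneOn_of_deriv_nonpos (convex_Icc 0 t)
      · exact fun s hs => ((hφd s hs).continuousAt).continuousWithinAt
      · intro s hs
        exact ((hφd s (interior_subset hs)).differentiableAt).differentiableWithinAt
      · intro s hs
        rw [(hφd s (interior_subset hs)).deriv]
        have hb := hDd s (hmem s (interior_subset hs)).1 (hmem s (interior_subset hs)).2
        have hpos : (0:ℝ) < 1 + D s^2 := by positivity
        have : (1/(1 + D s^2)) * (-(D s)^2 - lam s) ≤ (1/(1 + D s^2)) * (-(1 + D s^2)/2) :=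
          mul_le_mul_of_nonneg_left hb (by positivity)
        have h2 : (1/(1 + D s^2)) * (-(1 + D s^2)/2) = -(1/2) := by
          field_simp
        linarith [this, h2]
    have := hφanti (left_mem_Icc.mpr ht) (right_mem_Icc.mpr ht) ht
    simp only [hφdef, hD0] at this
    have harc := Real.neg_pi_div_two_lt_arctan (D t)
    linarith
  -- T is finite
  have hTne : T ≠ ⊤ := by
    intro htop
    have hpos : (0:ℝ) ≤ 2*Real.arctan D₀ + π := by
      have := Real.neg_pi_div_two_lt_arctan D₀
      have hπ := Real.pi_pos
      linarith
    have := htlt (2*Real.arctan D₀ + π) hpos (by rw [htop]; exact ENNReal.ofReal_lt_top)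
    linarith
  set Tr := T.toReal with hTrdef
  have hTr : T = ENNReal.ofReal Tr := (ENNReal.ofReal_toReal hTne).symm
  have hTrpos : 0 < Tr := ENNReal.toReal_pos hT.ne' hTne
  have hdom : ∀ t, 0 ≤ t → t < Tr → ENNReal.ofReal t < T := by
    intro t ht h
    rw [hTr]
    exact (ENNReal.ofReal_lt_ofReal_iff hTrpos).mpr h
  -- D is antitone
  have hanti : AntitoneOn D (Ico 0 Tr) := by
    apply antitoneOn_of_deriv_nonpos (convex_Ico 0 Tr)
    · exact fun s hs => ((hsol s hs.1 (hdom s hs.1 hs.2)).2.continuousAt).continuousWithinAt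
    · intro s hs
      rw [interior_Ico] at hs
      exact ((hsol s hs.1.le (hdom s hs.1.le hs.2)).2.differentiableAt).differentiableWithinAt
    · intro s hs
      rw [interior_Ico] at hs
      rw [(hsol s hs.1.le (hdom s hs.1.le hs.2)).2.deriv]
      have := hDd s hs.1.le (hdom s hs.1.le hs.2)
      nlinarith [sq_nonneg (D s)]
  -- D is not bounded below on [0, Tr)
  have hunbdd : ¬ BddBelow (D '' Ico 0 Tr) := by
    intro hbdd
    -- the limit L of D at Tr⁻
    set L := sInf (D '' Ico 0 Tr) with hLdef
    have hne : (D '' Ico 0 Tr).Nonempty := ⟨D 0, 0, ⟨le_refl 0, hTrpos⟩, rfl⟩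
    have hLle : ∀ s ∈ Ico (0:ℝ) Tr, L ≤ D s := fun s hs => csInf_le hbdd ⟨s, hs, rfl⟩
    have hDtend : Tendsto D (nhdsWithin Tr (Set.Iio Tr)) (nhds L) := by
      rw [Metric.tendsto_nhdsWithin_nhds]
      intro ε hε
      obtain ⟨y, ⟨s₀, hs₀, rfl⟩, hy⟩ := exists_lt_of_csInf_lt hne
        (show sInf (D '' Ico 0 Tr) < L + ε by rw [← hLdef]; linarith)
      refine ⟨Tr - s₀, by linarith [hs₀.2], fun {s} hsIio hdist => ?_⟩
      rw [Real.dist_eq, abs_lt] at hdist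
      have hs1 : s₀ < s := by linarith
      have hsm : s ∈ Ico 0 Tr := ⟨le_trans hs₀.1 hs1.le, hsIio⟩
      have h1 : L ≤ D s := hLle s hsm
      have h2 : D s ≤ D s₀ := hanti hs₀ hsm hs1.le
      rw [Real.dist_eq, abs_lt]
      constructor <;> linarith
    -- lam is an explicit function of D
    have hlamformula : ∀ s ∈ Ico (0:ℝ) Tr,
        lam s = 1 - (Real.sqrt (1 + C₀*(1 + D s^2)) - 1)/C₀ := by
      intro s hs
      have hr := hrel s hs.1 (hdom s hs.1 hs.2)
      have hu : 0 < 1 - lam s := sub_pos.mpr (hlt1 s hs.1 (hdom s hs.1 hs.2))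
      have hsq : (C₀*(1 - lam s) + 1)^2 = 1 + C₀*(1 + D s^2) := by nlinarith [hr]
      have hpos : 0 ≤ C₀*(1 - lam s) + 1 := by positivity
      rw [← hsq, Real.sqrt_sq hpos]
      field_simp
      ring
    set μ : ℝ := 1 - (Real.sqrt (1 + C₀*(1 + L^2)) - 1)/C₀ with hμdef
    have hΦcont : ContinuousAt (fun x : ℝ => 1 - (Real.sqrt (1 + C₀*(1+x^2)) - 1)/C₀) L := by
      fun_prop
    have hIoomem : Ioo (0:ℝ) Tr ∈ nhdsWithin Tr (Set.Iio Tr) :=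
      Ioo_mem_nhdsLT hTrpos
    have hlamtend : Tendsto lam (nhdsWithin Tr (Set.Iio Tr)) (nhds μ) := by
      have h1 : Tendsto (fun s => 1 - (Real.sqrt (1 + C₀*(1 + D s^2)) - 1)/C₀)
          (nhdsWithin Tr (Set.Iio Tr)) (nhds μ) := hΦcont.tendsto.comp hDtend
      refine h1.congr' ?_
      filter_upwards [hIoomem] with s hs
      exact (hlamformula s ⟨hs.1.le, hs.2⟩).symm
    -- limits of the derivatives
    have hlam'tend : Tendsto (fun s => D s * (1 - lam s)) (nhdsWithin Tr (Set.Iio Tr))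
        (nhds (L * (1 - μ))) := hDtend.mul (tendsto_const_nhds.sub hlamtend)
    have hD'tend : Tendsto (fun s => -(D s)^2 - lam s) (nhdsWithin Tr (Set.Iio Tr))
        (nhds (-L^2 - μ)) := ((hDtend.pow 2).neg).sub hlamtend
    -- local solution through (μ, L) at time Tr
    set v : ℝ × ℝ → ℝ × ℝ := fun p => (p.2 * (1 - p.1), -p.2^2 - p.1) with hvdef
    have hv : ContDiff ℝ 1 v := by
      apply ContDiff.prodMk
      · exact contDiff_snd.mul (contDiff_const.sub contDiff_fst)
      · exact ((contDiff_snd.pow 2).neg).sub contDiff_fst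
    obtain ⟨f, hfTr, ε, hε, hf⟩ := (hv.contDiffAt (x := (μ, L))).exists_forall_mem_closedBall_exists_eq_forall_mem_Ioo_hasDerivAt₀ Tr
    -- the glued functions
    set g1 : ℝ → ℝ := fun t => if t < Tr then lam t else (f t).1 with hg1def
    set g2 : ℝ → ℝ := fun t => if t < Tr then D t else (f t).2 with hg2def
    have hg1val : ∀ t, t < Tr → g1 t = lam t := fun t ht => if_pos ht
    have hg2val : ∀ t, t < Tr → g2 t = D t := fun t ht => if_pos ht
    have hg1val' : ∀ t, Tr ≤ t → g1 t = (f t).1 := fun t ht => if_neg (not_lt.mpr ht)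
    have hg2val' : ∀ t, Tr ≤ t → g2 t = (f t).2 := fun t ht => if_neg (not_lt.mpr ht)
    have hg1Tr : g1 Tr = μ := by rw [hg1val' Tr (le_refl Tr), hfTr]
    have hg2Tr : g2 Tr = L := by rw [hg2val' Tr (le_refl Tr), hfTr]
    -- derivatives of the glued functions below Tr
    have hg1lt : ∀ s, 0 ≤ s → s < Tr → HasDerivAt g1 (D s * (1 - lam s)) s := by
      intro s hs hsT
      have he1 : g1 =ᶠ[nhds s] lam :=
        eventually_of_mem (Iio_mem_nhds hsT) (fun x hx => if_pos hx)
      exact (hsol s hs (hdom s hs hsT)).1.congr_of_eventuallyEq he1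
    have hg2lt : ∀ s, 0 ≤ s → s < Tr → HasDerivAt g2 (-(D s)^2 - lam s) s := by
      intro s hs hsT
      have he2 : g2 =ᶠ[nhds s] D :=
        eventually_of_mem (Iio_mem_nhds hsT) (fun x hx => if_pos hx)
      exact (hsol s hs (hdom s hs hsT)).2.congr_of_eventuallyEq he2
    -- component derivatives of f
    have hTrmem : Tr ∈ Ioo (Tr - ε) (Tr + ε) := ⟨by linarith, by linarith⟩
    have hf1 : ∀ t ∈ Ioo (Tr - ε) (Tr + ε),
        HasDerivAt (fun s => (f s).1) ((f t).2 * (1 - (f t).1)) t := by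
      intro t ht
      have := (ContinuousLinearMap.fst ℝ ℝ ℝ).hasFDerivAt.comp_hasDerivAt t (hf t ht)
      simpa [hvdef, Function.comp_def] using this
    have hf2 : ∀ t ∈ Ioo (Tr - ε) (Tr + ε),
        HasDerivAt (fun s => (f s).2) (-(f t).2^2 - (f t).1) t := by
      intro t ht
      have := (ContinuousLinearMap.snd ℝ ℝ ℝ).hasFDerivAt.comp_hasDerivAt t (hf t ht)
      simpa [hvdef, Function.comp_def] using this
    -- derivative of the glued functions at Tr
    have hg1Trd : HasDerivAt g1 (L * (1 - μ)) Tr := by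
      have hR : HasDerivWithinAt g1 (L * (1 - μ)) (Ici Tr) Tr := by
        have h0 := (hf1 Tr hTrmem).hasDerivWithinAt (s := Ici Tr)
        rw [hfTr] at h0
        exact h0.congr (fun x hx => (hg1val' x hx).symm ▸ rfl) (hg1Tr ▸ (hg1val' Tr (le_refl Tr)))
      have hL : HasDerivWithinAt g1 (L * (1 - μ)) (Iic Tr) Tr := by
        apply hasDerivWithinAt_Iic_of_tendsto_deriv (s := Ioo 0 Tr)
        · intro x hx
          exact (hg1lt x hx.1.le hx.2).differentiableAt.differentiableWithinAt
        · show Tendsto g1 (nhdsWithin Tr (Ioo 0 Tr)) (nhds (g1 Tr))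
          rw [hg1Tr]
          refine (hlamtend.mono_left (nhdsWithin_mono _ Ioo_subset_Iio_self)).congr' ?_
          exact eventually_of_mem self_mem_nhdsWithin (fun x hx => (hg1val x hx.2).symm)
        · exact hIoomem
        · refine hlam'tend.congr' ?_
          filter_upwards [hIoomem] with x hx
          exact ((hg1lt x hx.1.le hx.2).deriv).symm
      simpa using hL.union hR
    have hg2Trd : HasDerivAt g2 (-L^2 - μ) Tr := by
      have hR : HasDerivWithinAt g2 (-L^2 - μ) (Ici Tr) Tr := by
        have h0 := (hf2 Tr hTrmem).hasDerivWithinAt (s := Ici Tr)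
        rw [hfTr] at h0
        exact h0.congr (fun x hx => (hg2val' x hx).symm ▸ rfl) (hg2Tr ▸ (hg2val' Tr (le_refl Tr)))
      have hL : HasDerivWithinAt g2 (-L^2 - μ) (Iic Tr) Tr := by
        apply hasDerivWithinAt_Iic_of_tendsto_deriv (s := Ioo 0 Tr)
        · intro x hx
          exact (hg2lt x hx.1.le hx.2).differentiableAt.differentiableWithinAt
        · show Tendsto g2 (nhdsWithin Tr (Ioo 0 Tr)) (nhds (g2 Tr))
          rw [hg2Tr]
          refine (hDtend.mono_left (nhdsWithin_mono _ Ioo_subset_Iio_self)).congr' ?_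
          exact eventually_of_mem self_mem_nhdsWithin (fun x hx => (hg2val x hx.2).symm)
        · exact hIoomem
        · refine hD'tend.congr' ?_
          filter_upwards [hIoomem] with x hx
          exact ((hg2lt x hx.1.le hx.2).deriv).symm
      simpa using hL.union hR
    -- the glued pair solves the system on [0, Tr + ε/2)
    have hglue : ∀ t : ℝ, 0 ≤ t → t < Tr + ε/2 →
        HasDerivAt g1 (g2 t * (1 - g1 t)) t ∧ HasDerivAt g2 (-(g2 t)^2 - g1 t) t := by
      intro t ht htl
      rcases lt_trichotomy t Tr with h | h | h
      · rw [hg1val t h, hg2val t h]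
        exact ⟨hg1lt t ht h, hg2lt t ht h⟩
      · subst h
        rw [hg1Tr, hg2Tr]
        exact ⟨hg1Trd, hg2Trd⟩
      · have htmem : t ∈ Ioo (Tr - ε) (Tr + ε) := ⟨by linarith, by linarith⟩
        have he1 : g1 =ᶠ[nhds t] (fun s => (f s).1) :=
          eventually_of_mem (Ioi_mem_nhds h) (fun x hx => hg1val' x (le_of_lt hx))
        have he2 : g2 =ᶠ[nhds t] (fun s => (f s).2) :=
          eventually_of_mem (Ioi_mem_nhds h) (fun x hx => hg2val' x (le_of_lt hx))
        rw [hg1val' t h.le, hg2val' t h.le]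
        exact ⟨(hf1 t htmem).congr_of_eventuallyEq he1,
          (hf2 t htmem).congr_of_eventuallyEq he2⟩
    -- contradiction with maximality
    have hlt : T < ENNReal.ofReal (Tr + ε/2) := by
      rw [hTr]
      exact (ENNReal.ofReal_lt_ofReal_iff (by linarith)).mpr (by linarith)
    refine hmax _ hlt ⟨g1, g2, ?_, ?_, ?_⟩
    · rw [hg1val 0 hTrpos, hlam0]
    · rw [hg2val 0 hTrpos, hD0]
    · intro t ht htl'
      have htlt' : t < Tr + ε/2 := by
        rwa [ENNReal.ofReal_lt_ofReal_iff (by linarith)] at htl'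
      exact hglue t ht htlt'
  -- D tends to -∞
  have hDbot : Tendsto D (nhdsWithin Tr (Set.Iio Tr)) atBot := by
    rw [tendsto_atBot]
    intro b
    have hex : ∃ t₀ ∈ Ico (0:ℝ) Tr, D t₀ < b := by
      by_contra hcon
      push_neg at hcon
      exact hunbdd ⟨b, fun y hy => by
        obtain ⟨t, ht, rfl⟩ := hy
        exact hcon t ht⟩
    obtain ⟨t₀, ht₀, hDt₀⟩ := hex
    filter_upwards [Ioo_mem_nhdsLT ht₀.2] with s hs
    exact le_of_lt (lt_of_le_of_lt (hanti ht₀ ⟨le_trans ht₀.1 hs.1.le, hs.2⟩ hs.1.le) hDt₀)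
  -- lam tends to -∞
  have hlambot : Tendsto lam (nhdsWithin Tr (Set.Iio Tr)) atBot := by
    rw [tendsto_atBot]
    intro b
    rcases le_or_gt 1 b with hb | hb
    · filter_upwards [Ioo_mem_nhdsLT hTrpos] with s hs
      exact le_trans (hlt1 s hs.1.le (hdom s hs.1.le hs.2)).le hb
    · set K := 1 - b with hKdef
      have hKpos : 0 < K := by linarith
      set c := max 1 (C₀*K^2 + 2*K) with hcdef
      have hc1 : (1:ℝ) ≤ c := le_max_left _ _
      have hc2 : C₀*K^2 + 2*K ≤ c := le_max_right _ _
      filter_upwards [hDbot.eventually (eventually_le_atBot (-c)),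
        Ioo_mem_nhdsLT hTrpos] with s hsD hs
      have hrel' := hrel s hs.1.le (hdom s hs.1.le hs.2)
      have hu : 0 < 1 - lam s := sub_pos.mpr (hlt1 s hs.1.le (hdom s hs.1.le hs.2))
      by_contra hcc
      push_neg at hcc
      have hsq : c^2 ≤ D s^2 := by nlinarith
      have hcsq : c ≤ c^2 := by nlinarith
      have hprod : 0 < C₀ * ((K - (1 - lam s)) * (K + (1 - lam s))) :=
        mul_pos hC₀ (mul_pos (by rw [hKdef]; linarith) (by rw [hKdef]; linarith))
      nlinarith [hprod]
  exact ⟨Tr, hTrpos, hTr, hlambot, hDbot⟩
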